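/- Let p be a prime and ω ∈ ℂ a primitive p-th root of unity. If I, J ⊆ {0,...,p-1} with |I| = |J|, and rational numbers a_j (j ∈ J) satisfy ∑_{j∈J} a_j ω^{ij} = 0 for every i ∈ I, then a_j = 0 for all j ∈ J. -/
import Mathlib

theorem rat_coeffs_zero (p : ℕ) (hp : p.Prime) (ω : ℂ) (hω : IsPrimitiveRoot ω p)
    (I J : Finset ℕ) (hI : I ⊆ Finset.range p) (hJ : J ⊆ Finset.range p)
    (hcard : I.card = J.card) (a : ℕ → ℚ)
    (hvan : ∀ i ∈ I, ∑ j ∈ J, (a j : ℂ) * ω ^ (i * j) = 0) :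
    ∀ j ∈ J, a j = 0 := by
  classical
  have hp0 : 0 < p := hp.pos
  set f : Polynomial ℚ := ∑ j ∈ J, Polynomial.C (a j) * Polynomial.X ^ j with hf
  have hcoeff : ∀ k, f.coeff k = if k ∈ J then a k else 0 := by
    intro k
    rw [hf, Polynomial.finset_sum_coeff]
    simp [Polynomial.coeff_X_pow, mul_ite]
  have heval : ∀ i ∈ I, Polynomial.aeval (ω ^ i) f = 0 := by
    intro i hi
    rw [hf]
    simp only [map_sum, map_mul, Polynomial.aeval_C, map_pow, Polynomial.aeval_X]
    rw [← hvan i hi]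
    apply Finset.sum_congr rfl
    intro j hj
    rw [← pow_mul]
    norm_cast
  by_cases hne : ∃ i ∈ I, i ≠ 0
  · obtain ⟨i, hiI, hi0⟩ := hne
    have hilt : i < p := Finset.mem_range.mp (hI hiI)
    have hcop : Nat.Coprime i p :=
      Nat.Coprime.symm ((Nat.Prime.coprime_iff_not_dvd hp).mpr
        (fun hd => hi0 (Nat.eq_zero_of_dvd_of_lt hd hilt)))
    haveI := Fact.mk hp
    have hprim : IsPrimitiveRoot (ω ^ i) p := hω.pow_of_coprime i hcop
    have hmin : Polynomial.cyclotomic p ℚ = minpoly ℚ (ω ^ i) :=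
      Polynomial.cyclotomic_eq_minpoly_rat hprim hp0
    have hdvd : Polynomial.cyclotomic p ℚ ∣ f := hmin ▸ minpoly.dvd ℚ _ (heval i hiI)
    intro j hj
    by_contra haj
    have hf0 : f ≠ 0 := fun h => haj (by
      have h2 := hcoeff j
      rw [h] at h2
      simpa [hj] using h2.symm)
    obtain ⟨g, hg⟩ := hdvd
    have hcyc0 : Polynomial.cyclotomic p ℚ ≠ 0 := Polynomial.cyclotomic_ne_zero p ℚ
    have hg0 : g ≠ 0 := fun h => hf0 (by rw [hg, h, mul_zero])
    have hdegf : f.natDegree ≤ p - 1 := by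
      rw [hf]
      apply Polynomial.natDegree_sum_le_of_forall_le
      intro k hk
      exact le_trans (Polynomial.natDegree_C_mul_X_pow_le _ _)
        (Nat.le_sub_one_of_lt (Finset.mem_range.mp (hJ hk)))
    have hdegc : (Polynomial.cyclotomic p ℚ).natDegree = p - 1 := by
      rw [Polynomial.natDegree_cyclotomic, Nat.totient_prime hp]
    have hdegsum : f.natDegree = (Polynomial.cyclotomic p ℚ).natDegree + g.natDegree := by
      rw [hg]; exact Polynomial.natDegree_mul hcyc0 hg0
    have hgdeg : g.natDegree = 0 := by omega
    obtain ⟨c, hc⟩ := Polynomial.natDegree_eq_zero.mp hgdeg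
    have hcyccoeff : ∀ k, k < p → (Polynomial.cyclotomic p ℚ).coeff k = 1 := by
      intro k hk
      rw [Polynomial.cyclotomic_prime, Polynomial.finset_sum_coeff]
      simp [Polynomial.coeff_X_pow, hk]
    have hfcoeff : ∀ k, k < p → f.coeff k = c := by
      intro k hk
      rw [hg, ← hc, Polynomial.coeff_mul_C, hcyccoeff k hk, one_mul]
    have hjlt : j < p := Finset.mem_range.mp (hJ hj)
    have hcaj : c = a j := by
      have := hfcoeff j hjlt
      rw [hcoeff j, if_pos hj] at this
      exact this.symm
    have hc0 : c ≠ 0 := hcaj ▸ haj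
    have hJeq : J = Finset.range p := by
      apply Finset.Subset.antisymm hJ
      intro k hk
      have hk' := hfcoeff k (Finset.mem_range.mp hk)
      rw [hcoeff k] at hk'
      by_contra hkJ
      rw [if_neg hkJ] at hk'
      exact hc0 hk'.symm
    have hak : ∀ k ∈ J, a k = c := by
      intro k hk
      have hk' := hfcoeff k (Finset.mem_range.mp (hJ hk))
      rw [hcoeff k, if_pos hk] at hk'
      exact hk'
    have hIeq : I = Finset.range p := by
      apply Finset.eq_of_subset_of_card_le hI
      rw [Finset.card_range, hcard, hJeq, Finset.card_range]
    have h0I : (0 : ℕ) ∈ I := by rw [hIeq]; exact Finset.mem_range.mpr hp0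
    have hsum := hvan 0 h0I
    simp only [zero_mul, pow_zero, mul_one] at hsum
    rw [Finset.sum_congr rfl (fun k hk => by rw [hak k hk])] at hsum
    rw [Finset.sum_const, hJeq, Finset.card_range] at hsum
    have : (c : ℂ) = 0 := by
      rw [nsmul_eq_mul] at hsum
      rcases mul_eq_zero.mp hsum with h | h
      · exact absurd h (Nat.cast_ne_zero.mpr hp0.ne')
      · exact h
    exact hc0 (by exact_mod_cast this)
  · push_neg at hne
    intro j hj
    have hJne : J.Nonempty := ⟨j, hj⟩
    have hIne : I.Nonempty := by
      rw [← Finset.card_pos, hcard, Finset.card_pos]; exact hJne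
    obtain ⟨i, hi⟩ := hIne
    have hi0 : i = 0 := hne i hi
    have hIsub : I ⊆ {0} := fun x hx => Finset.mem_singleton.mpr (hne x hx)
    have hJ1 : J.card = 1 := le_antisymm (hcard ▸ Finset.card_le_card hIsub) (Finset.card_pos.mpr hJne)
    have hJeq : J = {j} := Finset.eq_singleton_iff_unique_mem.mpr ⟨hj, fun x hx => by
      have := Finset.card_eq_one.mp hJ1
      obtain ⟨y, hy⟩ := this
      rw [hy] at hx hj
      rw [Finset.mem_singleton.mp hx, Finset.mem_singleton.mp hj]⟩
    have := hvan i hi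
    rw [hJeq, hi0] at this
    simp at this
    exact_mod_cast this
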